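/- Let d = p² with p prime. A density matrix ρ on ℂ^d lies in ConvHull(A ∪ B ∪ C) if and only if the following three conditions hold: (i) ρ ∈ KD⁺; (ii) Q_{ij}(ρ) + Q_{kl}(ρ) = Q_{il}(ρ) + Q_{kj}(ρ) for all i,k ∈ ℤ_d with i ≡ k (mod p) and all j,l ∈ ℤ_d; (iii) Q_{ij}(ρ) + Q_{kl}(ρ) = Q_{il}(ρ) + Q_{kj}(ρ) for all j,l ∈ ℤ_d with j ≡ l (mod p) and all i,k ∈ ℤ_d. -/

import Mathlib

open Complex Matrix
open scoped ComplexOrder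

noncomputable section

/-- `omega n = exp(2 π i / n)`, a primitive `n`-th root of unity. -/
def omega (n : ℕ) : ℂ := Complex.exp (2 * Real.pi * Complex.I / n)

/-- The standard basis vector `a i` of `ℂ^d`. -/
def stdVec (d : ℕ) (i : Fin d) : Fin d → ℂ := fun k => if k = i then 1 else 0

/-- The Fourier (DFT) basis vector `b j = (1/√d) ∑ i, ω_d^(i j) • a i`. -/
def fourierVec (d : ℕ) (j : Fin d) : Fin d → ℂ :=
  fun i => ((1 / Real.sqrt d : ℝ) : ℂ) * omega d ^ (i.val * j.val)

/-- The rank-one projector `|v⟩⟨v|` of a vector `v`, as a matrix. -/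
def proj (d : ℕ) (v : Fin d → ℂ) : Matrix (Fin d) (Fin d) ℂ :=
  Matrix.of fun i k => v i * (starRingEnd ℂ) (v k)

/-- The Kirkwood-Dirac quasiprobability `Q i j F = ⟨b j|a i⟩ * ⟨a i|F|b j⟩`. -/
def KDQ (d : ℕ) (F : Matrix (Fin d) (Fin d) ℂ) (i j : Fin d) : ℂ :=
  (starRingEnd ℂ) (fourierVec d j i) * ∑ k, F i k * fourierVec d j k

/-- The set `KD⁺` of KD classical density matrices: positive semidefinite, trace one,
and all KD quasiprobabilities are nonnegative reals. -/
def KDplus (d : ℕ) : Set (Matrix (Fin d) (Fin d) ℂ) :=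
  {ρ | ρ.PosSemidef ∧ ρ.trace = 1 ∧
    ∀ i j, (KDQ d ρ i j).im = 0 ∧ 0 ≤ (KDQ d ρ i j).re}

/-- The set `KD^r` of self-adjoint operators whose KD distribution is everywhere real. -/
def KDr (d : ℕ) : Set (Matrix (Fin d) (Fin d) ℂ) :=
  {F | F.IsHermitian ∧ ∀ i j, (KDQ d F i j).im = 0}

/-- `A = {|a i⟩⟨a i| : i ∈ ℤ_d}`. -/
def setA (d : ℕ) : Set (Matrix (Fin d) (Fin d) ℂ) :=
  {M | ∃ i : Fin d, M = proj d (stdVec d i)}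

/-- `B = {|b j⟩⟨b j| : j ∈ ℤ_d}`. -/
def setB (d : ℕ) : Set (Matrix (Fin d) (Fin d) ℂ) :=
  {M | ∃ j : Fin d, M = proj d (fourierVec d j)}

/-- For `d = p * q` : `ψ m s = (1/√q) ∑ k ∈ ℤ_q, ω_q^(s k) • a (k p + m)`
(so the `i`-th coordinate is nonzero iff `i ≡ m [MOD p]`, with `k = i / p`). -/
def psiPQ (d p q : ℕ) (m : Fin p) (s : Fin q) : Fin d → ℂ :=
  fun i => if i.val % p = m.val then
    ((1 / Real.sqrt q : ℝ) : ℂ) * omega q ^ (s.val * (i.val / p)) else 0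

/-- For `d = p * q` : `φ m' s' = (1/√p) ∑ k ∈ ℤ_p, ω_p^(s' k) • a (k q + m')`. -/
def phiPQ (d p q : ℕ) (m' : Fin q) (s' : Fin p) : Fin d → ℂ :=
  fun i => if i.val % q = m'.val then
    ((1 / Real.sqrt p : ℝ) : ℂ) * omega p ^ (s'.val * (i.val / q)) else 0

/-- For `d = p ^ 2` : `C = {|ψ m s⟩⟨ψ m s| : m, s ∈ ℤ_p}`. -/
def setC2 (d p : ℕ) : Set (Matrix (Fin d) (Fin d) ℂ) :=
  {M | ∃ m s : Fin p, M = proj d (psiPQ d p p m s)}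

/-- For `d = p * q` : `C = {|ψ m s⟩⟨ψ m s| : m ∈ ℤ_p, s ∈ ℤ_q}`. -/
def setC (d p q : ℕ) : Set (Matrix (Fin d) (Fin d) ℂ) :=
  {M | ∃ (m : Fin p) (s : Fin q), M = proj d (psiPQ d p q m s)}

/-- For `d = p * q` : `D = {|φ m' s'⟩⟨φ m' s'| : m' ∈ ℤ_q, s' ∈ ℤ_p}`. -/
def setD (d p q : ℕ) : Set (Matrix (Fin d) (Fin d) ℂ) :=
  {M | ∃ (m' : Fin q) (s' : Fin p), M = proj d (phiPQ d p q m' s')}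

/-- Matrix entries in the Fourier basis: `⟨b k|G|b j⟩`. -/
def entryB (d : ℕ) (G : Matrix (Fin d) (Fin d) ℂ) (k j : Fin d) : ℂ :=
  ∑ i, ∑ l, (starRingEnd ℂ) (fourierVec d k i) * G i l * fourierVec d j l

lemma omega_ne_zero (n : ℕ) : omega n ≠ 0 := Complex.exp_ne_zero _

lemma omega_prim (n : ℕ) (hn : n ≠ 0) : IsPrimitiveRoot (omega n) n :=
  Complex.isPrimitiveRoot_exp n hn

lemma omega_pow_self (n : ℕ) (hn : n ≠ 0) : omega n ^ n = 1 :=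
  (omega_prim n hn).pow_eq_one

lemma omega_pow_mod (n : ℕ) (hn : n ≠ 0) (a : ℕ) : omega n ^ a = omega n ^ (a % n) := by
  conv_lhs => rw [← Nat.div_add_mod a n]
  rw [pow_add, pow_mul, omega_pow_self n hn, one_pow, one_mul]

lemma abs_omega (n : ℕ) : ‖omega n‖ = 1 := by
  have : omega n = Complex.exp (((2 * Real.pi / n : ℝ) : ℂ) * Complex.I) := by
    unfold omega; congr 1; push_cast; ring
  rw [this, Complex.norm_exp_ofReal_mul_I]

lemma conj_mul_omega_pow (n a : ℕ) :
    (starRingEnd ℂ) (omega n ^ a) * omega n ^ a = 1 := by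
  rw [mul_comm, Complex.mul_conj, Complex.normSq_eq_norm_sq, norm_pow, abs_omega, one_pow]
  norm_num

lemma conj_omega_pow (n a : ℕ) : (starRingEnd ℂ) (omega n ^ a) = (omega n ^ a)⁻¹ :=
  eq_inv_of_mul_eq_one_left (conj_mul_omega_pow n a)

lemma orth (n : ℕ) (hn : n ≠ 0) (a b : ℕ) :
    ∑ k : Fin n, omega n ^ (k.val * a) * (starRingEnd ℂ) (omega n ^ (k.val * b)) =
      if a % n = b % n then (n : ℂ) else 0 := by
  have hterm : ∀ k : ℕ, omega n ^ (k * a) * (starRingEnd ℂ) (omega n ^ (k * b)) =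
      (omega n ^ a * (omega n ^ b)⁻¹) ^ k := by
    intro k
    rw [conj_omega_pow, mul_pow, inv_pow, ← pow_mul, ← pow_mul, mul_comm a k, mul_comm b k]
  set ζ := omega n ^ a * (omega n ^ b)⁻¹ with hζ
  have hζn : ζ ^ n = 1 := by
    rw [hζ, mul_pow, inv_pow, ← pow_mul, ← pow_mul, mul_comm a n, mul_comm b n,
      pow_mul, pow_mul, omega_pow_self n hn, one_pow, one_pow, inv_one, mul_one]
  by_cases h : a % n = b % n
  · have hone : ζ = 1 := by
      rw [hζ, omega_pow_mod n hn a, omega_pow_mod n hn b, h, mul_inv_cancel₀]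
      exact pow_ne_zero _ (omega_ne_zero n)
    simp only [hterm, hone, one_pow, Finset.sum_const, Finset.card_univ, Fintype.card_fin,
      nsmul_eq_mul, mul_one, if_pos h]
  · have hζ1 : ζ ≠ 1 := by
      intro hc
      apply h
      have hc' : omega n ^ a / omega n ^ b = 1 := by rw [div_eq_mul_inv]; exact hc
      have heq : omega n ^ a = omega n ^ b :=
        (div_eq_one_iff_eq (pow_ne_zero _ (omega_ne_zero n))).mp hc'
      rw [omega_pow_mod n hn a, omega_pow_mod n hn b] at heq
      exact (omega_prim n hn).pow_inj (Nat.mod_lt _ (Nat.pos_of_ne_zero hn))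
        (Nat.mod_lt _ (Nat.pos_of_ne_zero hn)) heq
    simp only [hterm]
    rw [Fin.sum_univ_eq_sum_range (fun k => ζ ^ k), geom_sum_eq hζ1, hζn]
    simp [h]

lemma omega_sq_pow (p : ℕ) (hp : p ≠ 0) : omega (p ^ 2) ^ p = omega p := by
  unfold omega
  rw [← Complex.exp_nat_mul]
  congr 1
  have hpc : (p : ℂ) ≠ 0 := Nat.cast_ne_zero.mpr hp
  push_cast
  field_simp

lemma mk_lt_sq {p : ℕ} (k u : Fin p) : k.val * p + u.val < p ^ 2 := by
  calc k.val * p + u.val < k.val * p + p := by omega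
  _ = (k.val + 1) * p := by ring
  _ ≤ p * p := Nat.mul_le_mul_right p k.isLt
  _ = p ^ 2 := (sq p).symm

lemma sum_sq {p d : ℕ} (hd : d = p ^ 2) (f : Fin d → ℂ) :
    ∑ i, f i = ∑ u : Fin p, ∑ k : Fin p, f ⟨k.val * p + u.val, hd ▸ mk_lt_sq k u⟩ := by
  subst hd
  have hbij : Function.Bijective
      (fun x : Fin p × Fin p => (⟨x.2.val * p + x.1.val, mk_lt_sq x.2 x.1⟩ : Fin (p ^ 2))) := by
    constructor
    · rintro ⟨u, k⟩ ⟨u', k'⟩ h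
      have hp0 : 0 < p := u.pos
      simp only [Fin.mk.injEq] at h
      have hu : u.val = u'.val := by
        have h2 := congrArg (fun x => x % p) h
        simp only [Nat.mul_add_mod', Nat.mod_eq_of_lt u.isLt, Nat.mod_eq_of_lt u'.isLt] at h2
        exact h2
      have hk : k.val = k'.val := Nat.eq_of_mul_eq_mul_right hp0 (by omega)
      exact Prod.ext (Fin.ext hu) (Fin.ext hk)
    · intro i
      have hp0 : 0 < p := by
        rcases Nat.eq_zero_or_pos p with h | h
        · exfalso; subst h; simpa using i.isLt
        · exact h
      have hlt : i.val < p * p := lt_of_lt_of_eq i.isLt (pow_two p)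
      refine ⟨(⟨i.val % p, Nat.mod_lt _ hp0⟩, ⟨i.val / p, (Nat.div_lt_iff_lt_mul hp0).mpr hlt⟩), ?_⟩
      exact Fin.ext (Nat.div_add_mod' i.val p)
  rw [← Fintype.sum_bijective _ hbij _ f (fun x => rfl), Fintype.sum_prod_type]

lemma ofReal_sqrt_inv_sq (n : ℕ) :
    ((1 / Real.sqrt n : ℝ) : ℂ) * ((1 / Real.sqrt n : ℝ) : ℂ) = (((n : ℝ)⁻¹ : ℝ) : ℂ) := by
  rw [← Complex.ofReal_mul]
  congr 1
  rw [div_mul_div_comm, one_mul, Real.mul_self_sqrt (Nat.cast_nonneg n), one_div]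

lemma fourier_conj_mul_self (d : ℕ) (i j : Fin d) :
    (starRingEnd ℂ) (fourierVec d j i) * fourierVec d j i = (((d : ℝ)⁻¹ : ℝ) : ℂ) := by
  unfold fourierVec
  rw [_root_.map_mul, Complex.conj_ofReal, mul_mul_mul_comm, conj_mul_omega_pow, mul_one,
    ofReal_sqrt_inv_sq]

lemma KDQ_proj (d : ℕ) (v : Fin d → ℂ) (i j : Fin d) :
    KDQ d (proj d v) i j = (starRingEnd ℂ) (fourierVec d j i) * v i *
      ∑ k, (starRingEnd ℂ) (v k) * fourierVec d j k := by
  unfold KDQ proj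
  simp only [Matrix.of_apply]
  rw [mul_assoc, show (∑ x, v i * (starRingEnd ℂ) (v x) * fourierVec d j x)
      = v i * ∑ k, (starRingEnd ℂ) (v k) * fourierVec d j k by
    rw [Finset.mul_sum]
    exact Finset.sum_congr rfl fun k _ => by ring]

lemma KDQ_projA (d : ℕ) (i0 i j : Fin d) :
    KDQ d (proj d (stdVec d i0)) i j = if i = i0 then (((d : ℝ)⁻¹ : ℝ) : ℂ) else 0 := by
  rw [KDQ_proj]
  unfold stdVec
  rw [show (∑ k, (starRingEnd ℂ) (if k = i0 then (1:ℂ) else 0) * fourierVec d j k)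
      = fourierVec d j i0 by
    rw [Finset.sum_eq_single i0]
    · simp
    · intro k _ hk; simp [hk]
    · intro h; exact absurd (Finset.mem_univ i0) h]
  by_cases h : i = i0
  · subst h; rw [if_pos rfl, if_pos rfl, mul_one, fourier_conj_mul_self]
  · rw [if_neg h, if_neg h, mul_zero, zero_mul]

lemma KDQ_projB (d : ℕ) (hd : d ≠ 0) (j0 i j : Fin d) :
    KDQ d (proj d (fourierVec d j0)) i j = if j = j0 then (((d : ℝ)⁻¹ : ℝ) : ℂ) else 0 := by
  rw [KDQ_proj]
  have hsum : (∑ k, (starRingEnd ℂ) (fourierVec d j0 k) * fourierVec d j k)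
      = if j = j0 then 1 else 0 := by
    unfold fourierVec
    have : ∀ k : Fin d, (starRingEnd ℂ) (((1 / Real.sqrt d : ℝ) : ℂ) * omega d ^ (k.val * j0.val))
        * (((1 / Real.sqrt d : ℝ) : ℂ) * omega d ^ (k.val * j.val))
        = (((1 / Real.sqrt d : ℝ) : ℂ) * ((1 / Real.sqrt d : ℝ) : ℂ)) *
          (omega d ^ (k.val * j.val) * (starRingEnd ℂ) (omega d ^ (k.val * j0.val))) := by
      intro k
      rw [_root_.map_mul, Complex.conj_ofReal]
      ring
    simp only [this]
    rw [← Finset.mul_sum, orth d hd j.val j0.val, ofReal_sqrt_inv_sq]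
    rw [Nat.mod_eq_of_lt j.isLt, Nat.mod_eq_of_lt j0.isLt]
    by_cases h : j = j0
    · subst h
      rw [if_pos rfl, if_pos rfl, ← Complex.ofReal_natCast, ← Complex.ofReal_mul]
      norm_num
      rw [inv_mul_cancel₀]
      exact Nat.cast_ne_zero.mpr hd
    · rw [if_neg (fun hv => h (Fin.ext hv)), if_neg h, mul_zero]
  rw [hsum]
  by_cases h : j = j0
  · subst h; rw [if_pos rfl, if_pos rfl, mul_one, fourier_conj_mul_self]
  · rw [if_neg h, if_neg h, mul_zero]

lemma KDQ_projC (p : ℕ) (hp : p ≠ 0) {d : ℕ} (hd : d = p ^ 2) (m s : Fin p) (i j : Fin d) :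
    KDQ d (proj d (psiPQ d p p m s)) i j =
      if i.val % p = m.val ∧ j.val % p = s.val then (((d : ℝ)⁻¹ : ℝ) : ℂ) else 0 := by
  have hp0 : 0 < p := Nat.pos_of_ne_zero hp
  have hdp : omega d ^ p = omega p := by rw [hd]; exact omega_sq_pow p hp
  rw [KDQ_proj]
  have hmod : ∀ t u : ℕ, u < p → (t * p + u) % p = u := fun t u hu => by
    rw [Nat.mul_add_mod', Nat.mod_eq_of_lt hu]
  have hdiv : ∀ t u : ℕ, u < p → (t * p + u) / p = t := fun t u hu => by
    rw [mul_comm, Nat.mul_add_div hp0, Nat.div_eq_of_lt hu, add_zero]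
  have hpow : ∀ t c : ℕ, omega d ^ ((t * p + c) * j.val) =
      omega p ^ (t * j.val) * omega d ^ (c * j.val) := by
    intro t c
    rw [add_mul, pow_add, show t * p * j.val = p * (t * j.val) by ring, pow_mul, hdp]
  have hsum : (∑ k, (starRingEnd ℂ) (psiPQ d p p m s k) * fourierVec d j k)
      = if j.val % p = s.val then
          ((1 / Real.sqrt p : ℝ) : ℂ) * ((1 / Real.sqrt d : ℝ) : ℂ) * (p : ℂ)
            * omega d ^ (m.val * j.val) else 0 := by
    rw [sum_sq hd]
    have houter : ∀ u t : Fin p,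
        (starRingEnd ℂ) (psiPQ d p p m s ⟨t.val * p + u.val, hd ▸ mk_lt_sq t u⟩) *
          fourierVec d j ⟨t.val * p + u.val, hd ▸ mk_lt_sq t u⟩
        = if u = m then
            (((1 / Real.sqrt p : ℝ) : ℂ) * ((1 / Real.sqrt d : ℝ) : ℂ)
              * omega d ^ (m.val * j.val)) *
            (omega p ^ (t.val * j.val) * (starRingEnd ℂ) (omega p ^ (t.val * s.val)))
          else 0 := by
      intro u t
      show (starRingEnd ℂ) (psiPQ d p p m s ⟨t.val * p + u.val, hd ▸ mk_lt_sq t u⟩) *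
          (((1 / Real.sqrt d : ℝ) : ℂ) * omega d ^ ((t.val * p + u.val) * j.val)) = _
      unfold psiPQ
      show (starRingEnd ℂ) (if (t.val * p + u.val) % p = m.val then
          ((1 / Real.sqrt p : ℝ) : ℂ) * omega p ^ (s.val * ((t.val * p + u.val) / p)) else 0)
          * _ = _
      rw [hmod t.val u.val u.isLt, hdiv t.val u.val u.isLt]
      by_cases hu : u = m
      · rw [if_pos (by rw [hu]), if_pos hu, _root_.map_mul, Complex.conj_ofReal,
          hpow t.val u.val, hu, mul_comm s.val t.val]
        ring
      · rw [if_neg (fun hv => hu (Fin.ext hv)), if_neg hu, map_zero, zero_mul]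
    simp only [houter]
    rw [Finset.sum_eq_single m]
    · simp only [eq_self_iff_true, if_true]
      rw [← Finset.mul_sum, orth p hp j.val s.val, Nat.mod_eq_of_lt s.isLt]
      by_cases hj : j.val % p = s.val
      · rw [if_pos hj, if_pos hj]; ring
      · rw [if_neg hj, if_neg hj, mul_zero]
    · intro u _ hu
      simp only [if_neg hu, Finset.sum_const_zero]
    · intro h; exact absurd (Finset.mem_univ m) h
  rw [hsum]
  show (starRingEnd ℂ) (((1 / Real.sqrt d : ℝ) : ℂ) * omega d ^ (i.val * j.val)) *
      (if i.val % p = m.val then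
        ((1 / Real.sqrt p : ℝ) : ℂ) * omega p ^ (s.val * (i.val / p)) else 0) * _ = _
  by_cases hi : i.val % p = m.val
  · by_cases hj : j.val % p = s.val
    · rw [if_pos hi, if_pos hj, if_pos ⟨hi, hj⟩]
      have hi' : i.val = (i.val / p) * p + m.val := by
        conv_lhs => rw [← Nat.div_add_mod' i.val p]
        rw [hi]
      have hsplit : omega d ^ (i.val * j.val) =
          omega p ^ ((i.val / p) * s.val) * omega d ^ (m.val * j.val) := by
        conv_lhs => rw [hi']
        rw [hpow (i.val / p) m.val]
        congr 1
        have hj' : j.val = (j.val / p) * p + s.val := by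
          conv_lhs => rw [← Nat.div_add_mod' j.val p]
          rw [hj]
        conv_lhs => rw [hj']
        rw [mul_add, pow_add,
          show i.val / p * (j.val / p * p) = p * (i.val / p * (j.val / p)) by ring,
          pow_mul, omega_pow_self p hp, one_pow, one_mul]
      rw [hsplit, _root_.map_mul, _root_.map_mul, Complex.conj_ofReal,
        mul_comm s.val (i.val / p)]
      calc ((1 / Real.sqrt d : ℝ) : ℂ) *
            ((starRingEnd ℂ) (omega p ^ (i.val / p * s.val)) *
              (starRingEnd ℂ) (omega d ^ (m.val * j.val))) *
            (((1 / Real.sqrt p : ℝ) : ℂ) * omega p ^ (i.val / p * s.val)) *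
            (((1 / Real.sqrt p : ℝ) : ℂ) * ((1 / Real.sqrt d : ℝ) : ℂ) * (p : ℂ) *
              omega d ^ (m.val * j.val))
          = (((1 / Real.sqrt d : ℝ) : ℂ) * ((1 / Real.sqrt d : ℝ) : ℂ)) *
            (((1 / Real.sqrt p : ℝ) : ℂ) * ((1 / Real.sqrt p : ℝ) : ℂ)) *
            ((starRingEnd ℂ) (omega p ^ (i.val / p * s.val)) * omega p ^ (i.val / p * s.val)) *
            ((starRingEnd ℂ) (omega d ^ (m.val * j.val)) * omega d ^ (m.val * j.val)) *
            (p : ℂ) := by ring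
        _ = (((d : ℝ)⁻¹ : ℝ) : ℂ) := by
            rw [conj_mul_omega_pow, conj_mul_omega_pow, ofReal_sqrt_inv_sq, ofReal_sqrt_inv_sq,
              mul_one, mul_one, ← Complex.ofReal_natCast, ← Complex.ofReal_mul,
              ← Complex.ofReal_mul]
            congr 1
            rw [mul_assoc, inv_mul_cancel₀ (by exact_mod_cast hp : ((p:ℝ) ≠ 0)), mul_one]
    · rw [if_pos hi, if_neg hj,
        if_neg (fun hc : i.val % p = m.val ∧ j.val % p = s.val => hj hc.2), mul_zero]
  · rw [if_neg hi,
      if_neg (fun hc : i.val % p = m.val ∧ j.val % p = s.val => hi hc.1), mul_zero, zero_mul]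

lemma trace_proj (d : ℕ) (v : Fin d → ℂ) :
    (proj d v).trace = ∑ i, v i * (starRingEnd ℂ) (v i) := by
  unfold Matrix.trace proj
  simp [Matrix.diag]

lemma trace_projA (d : ℕ) (i0 : Fin d) : (proj d (stdVec d i0)).trace = 1 := by
  rw [trace_proj]
  unfold stdVec
  rw [Finset.sum_eq_single i0] <;> simp

lemma trace_projB (d : ℕ) (hd : d ≠ 0) (j : Fin d) : (proj d (fourierVec d j)).trace = 1 := by
  rw [trace_proj]
  have hterm : ∀ i : Fin d, fourierVec d j i * (starRingEnd ℂ) (fourierVec d j i)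
      = (((d : ℝ)⁻¹ : ℝ) : ℂ) := fun i => by rw [mul_comm, fourier_conj_mul_self]
  simp only [hterm, Finset.sum_const, Finset.card_univ, Fintype.card_fin, nsmul_eq_mul]
  rw [← Complex.ofReal_natCast, ← Complex.ofReal_mul, mul_inv_cancel₀]
  · norm_num
  · exact Nat.cast_ne_zero.mpr hd

lemma trace_projC (p : ℕ) (hp : p ≠ 0) {d : ℕ} (hd : d = p ^ 2) (m s : Fin p) :
    (proj d (psiPQ d p p m s)).trace = 1 := by
  have hp0 : 0 < p := Nat.pos_of_ne_zero hp
  rw [trace_proj, sum_sq hd]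
  have hterm : ∀ u t : Fin p,
      psiPQ d p p m s ⟨t.val * p + u.val, hd ▸ mk_lt_sq t u⟩ *
        (starRingEnd ℂ) (psiPQ d p p m s ⟨t.val * p + u.val, hd ▸ mk_lt_sq t u⟩)
      = if u = m then (((p : ℝ)⁻¹ : ℝ) : ℂ) else 0 := by
    intro u t
    show psiPQ d p p m s ⟨t.val * p + u.val, hd ▸ mk_lt_sq t u⟩ * _ = _
    unfold psiPQ
    show (if (t.val * p + u.val) % p = m.val then
        ((1 / Real.sqrt p : ℝ) : ℂ) * omega p ^ (s.val * ((t.val * p + u.val) / p)) else 0) * _ = _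
    rw [Nat.mul_add_mod', Nat.mod_eq_of_lt u.isLt]
    by_cases hu : u = m
    · rw [if_pos (by rw [hu]), if_pos hu, _root_.map_mul, Complex.conj_ofReal,
        mul_mul_mul_comm, mul_comm (omega p ^ _), conj_mul_omega_pow, mul_one, ofReal_sqrt_inv_sq]
    · rw [if_neg (fun hv => hu (Fin.ext hv)), if_neg hu, zero_mul]
  simp only [hterm]
  rw [Finset.sum_eq_single m]
  · simp only [eq_self_iff_true, if_true, Finset.sum_const, Finset.card_univ, Fintype.card_fin,
      nsmul_eq_mul]
    rw [← Complex.ofReal_natCast, ← Complex.ofReal_mul, mul_inv_cancel₀]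
    · norm_num
    · exact Nat.cast_ne_zero.mpr hp
  · intro u _ hu
    simp only [if_neg hu, Finset.sum_const_zero]
  · intro h; exact absurd (Finset.mem_univ m) h

lemma proj_posSemidef (d : ℕ) (v : Fin d → ℂ) : (proj d v).PosSemidef := by
  rw [Matrix.posSemidef_iff_dotProduct_mulVec]
  constructor
  · ext i k
    simp only [Matrix.conjTranspose_apply, proj, Matrix.of_apply, star_mul', star_star,
      RingHomCompTriple.comp_apply]
    ring_nf
    simp [mul_comm]
  · intro x
    have key : dotProduct (star x) ((proj d v).mulVec x) =
        star (∑ k, (starRingEnd ℂ) (v k) * x k) * (∑ k, (starRingEnd ℂ) (v k) * x k) := by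
      calc dotProduct (star x) ((proj d v).mulVec x)
          = ∑ i, ∑ k, (star (x i) * v i) * ((starRingEnd ℂ) (v k) * x k) := by
            unfold dotProduct Matrix.mulVec dotProduct proj
            simp only [Matrix.of_apply, Pi.star_apply, Finset.mul_sum]
            exact Finset.sum_congr rfl fun i _ => Finset.sum_congr rfl fun k _ => by ring
        _ = (∑ i, star (x i) * v i) * (∑ k, (starRingEnd ℂ) (v k) * x k) := by
            rw [Finset.sum_mul_sum]
        _ = star (∑ k, (starRingEnd ℂ) (v k) * x k) * (∑ k, (starRingEnd ℂ) (v k) * x k) := by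
            congr 1
            rw [star_sum]
            exact Finset.sum_congr rfl fun i _ => by
              rw [star_mul']
              simp [mul_comm]
    rw [key]
    exact star_mul_self_nonneg _

lemma KDQ_add (d : ℕ) (M N : Matrix (Fin d) (Fin d) ℂ) (i j : Fin d) :
    KDQ d (M + N) i j = KDQ d M i j + KDQ d N i j := by
  unfold KDQ
  simp only [Matrix.add_apply, add_mul, Finset.sum_add_distrib, mul_add]

lemma KDQ_smul (d : ℕ) (r : ℝ) (M : Matrix (Fin d) (Fin d) ℂ) (i j : Fin d) :
    KDQ d (r • M) i j = (r : ℂ) * KDQ d M i j := by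
  unfold KDQ
  have : ∀ a b : Fin d, (r • M) a b = (r : ℂ) * M a b := fun a b => by
    simp [Matrix.smul_apply, Complex.real_smul]
  simp only [this]
  rw [Finset.mul_sum, Finset.mul_sum, Finset.mul_sum]
  exact Finset.sum_congr rfl fun k _ => by ring

lemma KDQ_injective (d : ℕ) (hd : d ≠ 0) (ρ σ : Matrix (Fin d) (Fin d) ℂ)
    (h : ∀ i j, KDQ d ρ i j = KDQ d σ i j) : ρ = σ := by
  set W : Matrix (Fin d) (Fin d) ℂ := Matrix.of fun i j => fourierVec d j i with hW
  have hWW : W * W.conjTranspose = 1 := by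
    ext i k
    rw [Matrix.mul_apply]
    simp only [hW, Matrix.conjTranspose_apply, Matrix.of_apply]
    have hterm : ∀ l : Fin d, fourierVec d l i * star (fourierVec d l k)
        = (((1 / Real.sqrt d : ℝ) : ℂ) * ((1 / Real.sqrt d : ℝ) : ℂ)) *
          (omega d ^ (l.val * i.val) * (starRingEnd ℂ) (omega d ^ (l.val * k.val))) := by
      intro l
      unfold fourierVec
      rw [mul_comm i.val l.val, mul_comm k.val l.val, star_mul']
      simp only [Complex.star_def, Complex.conj_ofReal]
      ring
    simp only [hterm]
    rw [← Finset.mul_sum, orth d hd i.val k.val, Nat.mod_eq_of_lt i.isLt,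
      Nat.mod_eq_of_lt k.isLt, ofReal_sqrt_inv_sq]
    by_cases hik : i = k
    · subst hik
      rw [if_pos rfl, Matrix.one_apply_eq, ← Complex.ofReal_natCast, ← Complex.ofReal_mul,
        inv_mul_cancel₀ (Nat.cast_ne_zero.mpr hd), Complex.ofReal_one]
    · rw [if_neg (fun hv => hik (Fin.ext hv)), mul_zero, Matrix.one_apply_ne hik]
  have hfne : ∀ i j : Fin d, (starRingEnd ℂ) (fourierVec d j i) ≠ 0 := by
    intro i j
    have hne : fourierVec d j i ≠ 0 := by
      unfold fourierVec
      apply mul_ne_zero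
      · rw [Complex.ofReal_ne_zero]
        have h2 : 0 < Real.sqrt d := Real.sqrt_pos.mpr (by exact_mod_cast Nat.pos_of_ne_zero hd)
        positivity
      · exact pow_ne_zero _ (omega_ne_zero d)
    intro hc
    exact hne (by simpa using congrArg (starRingEnd ℂ) hc)
  have hmul : ρ * W = σ * W := by
    ext i j
    rw [Matrix.mul_apply, Matrix.mul_apply]
    have := h i j
    unfold KDQ at this
    have hcancel := mul_left_cancel₀ (hfne i j) this
    simpa only [hW, Matrix.of_apply] using hcancel
  calc ρ = ρ * (W * W.conjTranspose) := by rw [hWW, Matrix.mul_one]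
    _ = (ρ * W) * W.conjTranspose := by rw [Matrix.mul_assoc]
    _ = (σ * W) * W.conjTranspose := by rw [hmul]
    _ = σ * (W * W.conjTranspose) := by rw [Matrix.mul_assoc]
    _ = σ := by rw [hWW, Matrix.mul_one]

lemma real_smul_apply (d : ℕ) (c : ℝ) (M : Matrix (Fin d) (Fin d) ℂ) (i j : Fin d) :
    (c • M) i j = (c : ℂ) * M i j := by
  simp [Matrix.smul_apply, Complex.real_smul]

lemma hermitian_real_smul (d : ℕ) (c : ℝ) (M : Matrix (Fin d) (Fin d) ℂ)
    (hM : M.IsHermitian) : (c • M).IsHermitian := by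
  ext i j
  rw [Matrix.conjTranspose_apply, real_smul_apply, real_smul_apply, star_mul']
  have h1 : star (M j i) = M i j := by rw [← Matrix.conjTranspose_apply, hM]
  rw [h1]
  simp [Complex.star_def, Complex.conj_ofReal, mul_comm]


lemma KDQ_zero (d : ℕ) (i j : Fin d) : KDQ d 0 i j = 0 := by
  unfold KDQ
  simp

lemma KDQ_finsum (d : ℕ) {ι : Type*} (t : Finset ι) (M : ι → Matrix (Fin d) (Fin d) ℂ)
    (i j : Fin d) : KDQ d (∑ x ∈ t, M x) i j = ∑ x ∈ t, KDQ d (M x) i j := by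
  induction t using Finset.cons_induction with
  | empty => simp [KDQ_zero]
  | cons a t ha ih => rw [Finset.sum_cons, Finset.sum_cons, KDQ_add, ih]

/-- For `d = p²` with `p` prime, a density matrix `ρ` lies in
`ConvHull(A ∪ B ∪ C)` iff (i) `ρ ∈ KD⁺`, (ii) the KD distribution is additive across
rows congruent mod `p`, and (iii) additive across columns congruent mod `p`. -/
theorem stmt12 (p d : ℕ) (hp : p.Prime) (hd : d = p ^ 2)
    (ρ : Matrix (Fin d) (Fin d) ℂ) (hpos : ρ.PosSemidef) (htr : ρ.trace = 1) :
    ρ ∈ convexHull ℝ (setA d ∪ setB d ∪ setC2 d p) ↔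
      (ρ ∈ KDplus d ∧
        (∀ i k j l : Fin d, i.val % p = k.val % p →
          KDQ d ρ i j + KDQ d ρ k l = KDQ d ρ i l + KDQ d ρ k j) ∧
        (∀ i k j l : Fin d, j.val % p = l.val % p →
          KDQ d ρ i j + KDQ d ρ k l = KDQ d ρ i l + KDQ d ρ k j)) := by
  have hp0 : p ≠ 0 := hp.ne_zero
  have hd0 : d ≠ 0 := by rw [hd]; exact pow_ne_zero 2 hp0
  constructor
  · intro hmem
    have hsubset : (setA d ∪ setB d ∪ setC2 d p) ⊆
        {M : Matrix (Fin d) (Fin d) ℂ | M ∈ KDplus d ∧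
          (∀ i k j l : Fin d, i.val % p = k.val % p →
            KDQ d M i j + KDQ d M k l = KDQ d M i l + KDQ d M k j) ∧
          (∀ i k j l : Fin d, j.val % p = l.val % p →
            KDQ d M i j + KDQ d M k l = KDQ d M i l + KDQ d M k j)} := by
      rintro M ((⟨i0, rfl⟩ | ⟨j0, rfl⟩) | ⟨m, s, rfl⟩)
      · refine ⟨⟨proj_posSemidef d _, trace_projA d i0, fun i j => ?_⟩,
          fun i k j l h => ?_, fun i k j l h => ?_⟩
        · rw [KDQ_projA]
          split_ifs <;> simp
        · rw [KDQ_projA, KDQ_projA, KDQ_projA, KDQ_projA]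
        · rw [KDQ_projA, KDQ_projA, KDQ_projA, KDQ_projA]
      · refine ⟨⟨proj_posSemidef d _, trace_projB d hd0 j0, fun i j => ?_⟩,
          fun i k j l h => ?_, fun i k j l h => ?_⟩
        · rw [KDQ_projB d hd0]
          split_ifs <;> simp
        · rw [KDQ_projB d hd0, KDQ_projB d hd0, KDQ_projB d hd0, KDQ_projB d hd0]; ring
        · rw [KDQ_projB d hd0, KDQ_projB d hd0, KDQ_projB d hd0, KDQ_projB d hd0]; ring
      · refine ⟨⟨proj_posSemidef d _, trace_projC p hp0 hd m s, fun i j => ?_⟩,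
          fun i k j l h => ?_, fun i k j l h => ?_⟩
        · rw [KDQ_projC p hp0 hd]
          split_ifs <;> simp
        · simp only [KDQ_projC p hp0 hd, h]; try ring
        · simp only [KDQ_projC p hp0 hd, h]; try ring
    have hconv : Convex ℝ {M : Matrix (Fin d) (Fin d) ℂ | M ∈ KDplus d ∧
          (∀ i k j l : Fin d, i.val % p = k.val % p →
            KDQ d M i j + KDQ d M k l = KDQ d M i l + KDQ d M k j) ∧
          (∀ i k j l : Fin d, j.val % p = l.val % p →
            KDQ d M i j + KDQ d M k l = KDQ d M i l + KDQ d M k j)} := by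
      rintro x ⟨⟨hx1, hx2, hx3⟩, hx4, hx5⟩ y ⟨⟨hy1, hy2, hy3⟩, hy4, hy5⟩ a b ha hb hab
      have hQ : ∀ i j, KDQ d (a • x + b • y) i j
          = (a : ℂ) * KDQ d x i j + (b : ℂ) * KDQ d y i j := fun i j => by
        rw [KDQ_add, KDQ_smul, KDQ_smul]
      refine ⟨⟨Matrix.posSemidef_iff_dotProduct_mulVec.mpr ⟨?_, ?_⟩, ?_, fun i j => ⟨?_, ?_⟩⟩, fun i k j l h => ?_, fun i k j l h => ?_⟩
      · exact Matrix.IsHermitian.add (hermitian_real_smul d a x hx1.1)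
          (hermitian_real_smul d b y hy1.1)
      · intro v
        rw [Matrix.add_mulVec, Matrix.smul_mulVec, Matrix.smul_mulVec,
          dotProduct_add, dotProduct_smul, dotProduct_smul]
        have h1 := hx1.dotProduct_mulVec_nonneg v
        have h2 := hy1.dotProduct_mulVec_nonneg v
        rw [Complex.le_def] at h1 h2 ⊢
        obtain ⟨h1r, h1i⟩ := h1
        obtain ⟨h2r, h2i⟩ := h2
        simp only [Complex.zero_re, Complex.zero_im] at h1r h1i h2r h2i ⊢
        rw [Complex.real_smul, Complex.real_smul]
        constructor
        · simp only [Complex.add_re, Complex.mul_re, Complex.ofReal_re, Complex.ofReal_im,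
            zero_mul, sub_zero]
          exact add_nonneg (mul_nonneg ha h1r) (mul_nonneg hb h2r)
        · simp only [Complex.add_im, Complex.mul_im, Complex.ofReal_re, Complex.ofReal_im,
            zero_mul, add_zero]
          rw [← h1i, ← h2i]
          simp
      · rw [Matrix.trace_add, Matrix.trace_smul, Matrix.trace_smul, hx2, hy2]
        simp only [smul_eq_mul, Complex.real_smul, mul_one]
        exact_mod_cast hab
      · rw [hQ]
        simp only [Complex.add_im, Complex.mul_im, Complex.ofReal_re, Complex.ofReal_im,
          zero_mul, add_zero]
        rw [(hx3 i j).1, (hy3 i j).1]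
        simp
      · rw [hQ]
        simp only [Complex.add_re, Complex.mul_re, Complex.ofReal_re, Complex.ofReal_im,
          zero_mul, sub_zero]
        exact add_nonneg (mul_nonneg ha (hx3 i j).2) (mul_nonneg hb (hy3 i j).2)
      · have e1 := hx4 i k j l h
        have e2 := hy4 i k j l h
        simp only [hQ]
        linear_combination (a : ℂ) * e1 + (b : ℂ) * e2
      · have e1 := hx5 i k j l h
        have e2 := hy5 i k j l h
        simp only [hQ]
        linear_combination (a : ℂ) * e1 + (b : ℂ) * e2
    exact convexHull_min hsubset hconv hmem
  · rintro ⟨⟨hpsd, htr', hQpos⟩, h2, h3⟩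
    have hpp : 0 < p := Nat.pos_of_ne_zero hp0
    have hdpos : 0 < d := Nat.pos_of_ne_zero hd0
    have hdr : ((d : ℝ)) ≠ 0 := Nat.cast_ne_zero.mpr hd0
    set q : Fin d → Fin d → ℝ := fun i j => (KDQ d ρ i j).re with hqdef
    have hQ : ∀ i j, KDQ d ρ i j = ((q i j : ℝ) : ℂ) := by
      intro i j
      apply Complex.ext
      · simp [hqdef]
      · simp [(hQpos i j).1]
    have h2r : ∀ i k j l : Fin d, i.val % p = k.val % p → q i j + q k l = q i l + q k j := by
      intro i k j l hik
      have e := h2 i k j l hik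
      rw [hQ, hQ, hQ, hQ, ← Complex.ofReal_add, ← Complex.ofReal_add] at e
      exact_mod_cast e
    have h3r : ∀ i k j l : Fin d, j.val % p = l.val % p → q i j + q k l = q i l + q k j := by
      intro i k j l hjl
      have e := h3 i k j l hjl
      rw [hQ, hQ, hQ, hQ, ← Complex.ofReal_add, ← Complex.ofReal_add] at e
      exact_mod_cast e
    set idx : Fin p → Fin p → Fin d := fun m u => ⟨u.val * p + m.val, hd ▸ mk_lt_sq u m⟩
      with hidxdef
    have hidxmod : ∀ m u : Fin p, (idx m u).val % p = m.val := by
      intro m u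
      show (u.val * p + m.val) % p = m.val
      rw [Nat.mul_add_mod', Nat.mod_eq_of_lt m.isLt]
    set rfin : Fin d → Fin p := fun i => ⟨i.val % p, Nat.mod_lt _ hpp⟩ with hrfdef
    have hidx_self : ∀ i : Fin d,
        idx (rfin i) ⟨i.val / p, (Nat.div_lt_iff_lt_mul hpp).mpr
          (lt_of_lt_of_eq i.isLt (hd.symm ▸ pow_two p))⟩ = i := by
      intro i
      apply Fin.ext
      exact Nat.div_add_mod' i.val p
    set j0 : Fin d := ⟨0, hdpos⟩
    set i0 : Fin d := ⟨0, hdpos⟩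
    have hU : ∀ m : Fin p, ∃ u : Fin p, ∀ u' : Fin p, q (idx m u) j0 ≤ q (idx m u') j0 := by
      intro m
      obtain ⟨u, -, hu⟩ := Finset.exists_min_image Finset.univ (fun u => q (idx m u) j0)
        ⟨⟨0, hpp⟩, Finset.mem_univ _⟩
      exact ⟨u, fun u' => hu u' (Finset.mem_univ _)⟩
    choose U hUmin using hU
    have hV : ∀ m : Fin p, ∃ v : Fin p, ∀ v' : Fin p, q i0 (idx m v) ≤ q i0 (idx m v') := by
      intro m
      obtain ⟨v, -, hv⟩ := Finset.exists_min_image Finset.univ (fun v => q i0 (idx m v))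
        ⟨⟨0, hpp⟩, Finset.mem_univ _⟩
      exact ⟨v, fun v' => hv v' (Finset.mem_univ _)⟩
    choose V hVmin using hV
    set lam : Fin d → ℝ := fun i => d * (q i j0 - q (idx (rfin i) (U (rfin i))) j0)
      with hlamdef
    set mu : Fin d → ℝ := fun j => d * (q i0 j - q i0 (idx (rfin j) (V (rfin j)))) with hmudef
    set nu : Fin p → Fin p → ℝ :=
      fun m s => d * q (idx m (U m)) (idx s (V s)) with hnudef
    have hlam_nonneg : ∀ i, 0 ≤ lam i := by
      intro i
      apply mul_nonneg (Nat.cast_nonneg d)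
      rw [sub_nonneg]
      have := hUmin (rfin i) ⟨i.val / p, (Nat.div_lt_iff_lt_mul hpp).mpr
        (lt_of_lt_of_eq i.isLt (hd.symm ▸ pow_two p))⟩
      rwa [hidx_self i] at this
    have hmu_nonneg : ∀ j, 0 ≤ mu j := by
      intro j
      apply mul_nonneg (Nat.cast_nonneg d)
      rw [sub_nonneg]
      have := hVmin (rfin j) ⟨j.val / p, (Nat.div_lt_iff_lt_mul hpp).mpr
        (lt_of_lt_of_eq j.isLt (hd.symm ▸ pow_two p))⟩
      rwa [hidx_self j] at this
    have hnu_nonneg : ∀ m s, 0 ≤ nu m s :=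
      fun m s => mul_nonneg (Nat.cast_nonneg d) (hQpos _ _).2
    have hkey : ∀ i j : Fin d, lam i + mu j + nu (rfin i) (rfin j) = d * q i j := by
      intro i j
      have hiU : i.val % p = (idx (rfin i) (U (rfin i))).val % p := by
        rw [hidxmod]
      have hjV : j.val % p = (idx (rfin j) (V (rfin j))).val % p := by
        rw [hidxmod]
      have e1 := h2r i (idx (rfin i) (U (rfin i))) j j0 hiU
      have e2 := h3r (idx (rfin i) (U (rfin i))) i0 j (idx (rfin j) (V (rfin j))) hjV
      have hlin : (q i j0 - q (idx (rfin i) (U (rfin i))) j0)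
          + (q i0 j - q i0 (idx (rfin j) (V (rfin j))))
          + q (idx (rfin i) (U (rfin i))) (idx (rfin j) (V (rfin j))) = q i j := by
        linarith
      simp only [hlamdef, hmudef, hnudef]
      linear_combination (d : ℝ) * hlin
    set w : (Fin d ⊕ Fin d) ⊕ Fin p × Fin p → ℝ := fun x =>
      match x with
      | Sum.inl (Sum.inl i) => lam i
      | Sum.inl (Sum.inr j) => mu j
      | Sum.inr ms => nu ms.1 ms.2
      with hwdef
    set z : (Fin d ⊕ Fin d) ⊕ Fin p × Fin p → Matrix (Fin d) (Fin d) ℂ := fun x =>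
      match x with
      | Sum.inl (Sum.inl i) => proj d (stdVec d i)
      | Sum.inl (Sum.inr j) => proj d (fourierVec d j)
      | Sum.inr ms => proj d (psiPQ d p p ms.1 ms.2)
      with hzdef
    have hKDQz : ∀ i j : Fin d, ∀ x, KDQ d (z x) i j = (w x : ℂ) * 0 + KDQ d (z x) i j := by
      intro i j x; ring
    have hKDQσ : ∀ i j : Fin d, KDQ d (∑ x, w x • z x) i j = KDQ d ρ i j := by
      intro i j
      rw [KDQ_finsum]
      simp only [KDQ_smul]
      rw [Fintype.sum_sum_type, Fintype.sum_sum_type, Fintype.sum_prod_type]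
      have hA : (∑ i' : Fin d, (w (Sum.inl (Sum.inl i')) : ℂ) *
          KDQ d (z (Sum.inl (Sum.inl i'))) i j)
          = (lam i : ℂ) * (((d : ℝ)⁻¹ : ℝ) : ℂ) := by
        rw [Finset.sum_eq_single i]
        · show (lam i : ℂ) * KDQ d (proj d (stdVec d i)) i j = _
          rw [KDQ_projA, if_pos rfl]
        · intro i' _ hne
          show (lam i' : ℂ) * KDQ d (proj d (stdVec d i')) i j = 0
          rw [KDQ_projA, if_neg (fun hc => hne hc.symm), mul_zero]
        · intro hc; exact absurd (Finset.mem_univ i) hc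
      have hB : (∑ j' : Fin d, (w (Sum.inl (Sum.inr j')) : ℂ) *
          KDQ d (z (Sum.inl (Sum.inr j'))) i j)
          = (mu j : ℂ) * (((d : ℝ)⁻¹ : ℝ) : ℂ) := by
        rw [Finset.sum_eq_single j]
        · show (mu j : ℂ) * KDQ d (proj d (fourierVec d j)) i j = _
          rw [KDQ_projB d hd0, if_pos rfl]
        · intro j' _ hne
          show (mu j' : ℂ) * KDQ d (proj d (fourierVec d j')) i j = 0
          rw [KDQ_projB d hd0, if_neg (fun hc => hne hc.symm), mul_zero]
        · intro hc; exact absurd (Finset.mem_univ j) hc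
      have hC : (∑ m : Fin p, ∑ s : Fin p, (w (Sum.inr (m, s)) : ℂ) *
          KDQ d (z (Sum.inr (m, s))) i j)
          = (nu (rfin i) (rfin j) : ℂ) * (((d : ℝ)⁻¹ : ℝ) : ℂ) := by
        rw [Finset.sum_eq_single (rfin i)]
        · rw [Finset.sum_eq_single (rfin j)]
          · show (nu (rfin i) (rfin j) : ℂ) *
              KDQ d (proj d (psiPQ d p p (rfin i) (rfin j))) i j = _
            rw [KDQ_projC p hp0 hd, if_pos ⟨rfl, rfl⟩]
          · intro s' _ hne
            show (nu (rfin i) s' : ℂ) * KDQ d (proj d (psiPQ d p p (rfin i) s')) i j = 0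
            rw [KDQ_projC p hp0 hd, if_neg (fun hc => hne (Fin.ext hc.2.symm)), mul_zero]
          · intro hc; exact absurd (Finset.mem_univ (rfin j)) hc
        · intro m' _ hne
          have : ∀ s' : Fin p, (w (Sum.inr (m', s')) : ℂ) *
              KDQ d (z (Sum.inr (m', s'))) i j = 0 := by
            intro s'
            show (nu m' s' : ℂ) * KDQ d (proj d (psiPQ d p p m' s')) i j = 0
            rw [KDQ_projC p hp0 hd, if_neg (fun hc => hne (Fin.ext hc.1.symm)), mul_zero]
          simp only [this, Finset.sum_const_zero]
        · intro hc; exact absurd (Finset.mem_univ (rfin i)) hc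
      rw [hA, hB, hC, hQ i j]
      rw [← add_mul, ← add_mul, ← Complex.ofReal_add, ← Complex.ofReal_add,
        ← Complex.ofReal_mul]
      congr 1
      rw [hkey i j]
      field_simp
    have hσρ : (∑ x, w x • z x) = ρ := KDQ_injective d hd0 _ _ hKDQσ
    have htrz : ∀ x, (z x).trace = 1 := by
      rintro ((i | j) | ⟨m, s⟩)
      · exact trace_projA d i
      · exact trace_projB d hd0 j
      · exact trace_projC p hp0 hd m s
    have hsum1 : (∑ x, w x) = 1 := by
      have ht : (∑ x, w x • z x).trace = ((∑ x, w x : ℝ) : ℂ) := by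
        rw [Matrix.trace_sum]
        rw [Complex.ofReal_sum]
        apply Finset.sum_congr rfl
        intro x _
        rw [Matrix.trace_smul, htrz x, Complex.real_smul, mul_one]
      rw [hσρ, htr'] at ht
      exact_mod_cast ht.symm
    have hw_nonneg : ∀ x ∈ Finset.univ, 0 ≤ w x := by
      rintro ((i | j) | ⟨m, s⟩) -
      · exact hlam_nonneg i
      · exact hmu_nonneg j
      · exact hnu_nonneg m s
    have hz_mem : ∀ x ∈ Finset.univ,
        z x ∈ (setA d ∪ setB d ∪ setC2 d p) := by
      rintro ((i | j) | ⟨m, s⟩) -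
      · exact Or.inl (Or.inl ⟨i, rfl⟩)
      · exact Or.inl (Or.inr ⟨j, rfl⟩)
      · exact Or.inr ⟨m, s, rfl⟩
    have hmem := Finset.centerMass_mem_convexHull Finset.univ hw_nonneg
      (by rw [hsum1]; exact one_pos) hz_mem
    rw [Finset.centerMass_eq_of_sum_1 _ _ hsum1, hσρ] at hmem
    exact hmem
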